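/- Let F be a field, t ∈ F invertible, r ≥ 2, and R a unital associative F-algebra containing r−1 mutually commuting t-oscillator triples (a_i, a†_i, k_i), 2 ≤ i ≤ r (elements of distinct triples commute). Define the (r+1)×r matrix L̃(x) over R, rows indexed 0,…,r and columns indexed 0,…,r−1, by: L̃_{00} = 1; L̃_{0j} = a_{j+1} for 1 ≤ j ≤ r−1; L̃_{10} = x·k_2·k_3···k_r; L̃_{i0} = x·a†_i·k_{i+1}···k_r for 2 ≤ i ≤ r; L̃_{i,i−1} = x·k_{i+1}···k_r for 2 ≤ i ≤ r; L̃_{ij} = x·a_{j+1}·a†_i·k_{i+1}···k_r for 1 ≤ j+1 < i ≤ r; and L̃_{ij} = 0 for 1 ≤ i ≤ j ≤ r−1. Then for all x, y ∈ F with t·x ≠ y the rank-reducing intertwining relation holds: Ř^{(r)}(x,y)·(L̃(x)⊗L̃(y)) = (L̃(y)⊗L̃(x))·Ř^{(r−1)}(x,y). -/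

import Mathlib

/-!
STATEMENT 7: the reduced `(r+1) × r` matrix `L̃(x)`, built from `r−1` mutually commuting
`t`-oscillator triples, satisfies the rank-reducing intertwining relation
`Ř^{(r)}(x,y)·(L̃(x)⊗L̃(y)) = (L̃(y)⊗L̃(x))·Ř^{(r−1)}(x,y)`.
-/

open scoped BigOperators

/-- A `t`-oscillator triple `(a, a†, k)` in an `F`-algebra `R`. -/
def IsOscTriple {F R : Type*} [Field F] [Ring R] [Algebra F R]
    (t : F) (a ad k : R) : Prop :=
  a * k = t • (k * a) ∧ ad * k = t⁻¹ • (k * ad) ∧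
    a * ad = 1 - k ∧ ad * a = 1 - t⁻¹ • k

/-- The entries of the `R`-matrix `Ř^{(N-1)}(x,y)`. -/
def Rmat {F : Type*} [Field F] (N : ℕ) (t x y : F)
    (p q : Fin N × Fin N) : F :=
  (if p.1 = p.2 ∧ q = p then 1 else 0)
  + (if p.1 < p.2 ∧ q = (p.2, p.1) then t * (x - y) / (t * x - y) else 0)
  + (if p.2 < p.1 ∧ q = (p.2, p.1) then (x - y) / (t * x - y) else 0)
  + (if p.1 < p.2 ∧ q = p then x * (t - 1) / (t * x - y) else 0)
  + (if p.2 < p.1 ∧ q = p then y * (t - 1) / (t * x - y) else 0)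

/-- The ordered product `k_{i+1} · k_{i+2} ⋯ k_r`. -/
def kprod {R : Type*} [Ring R] (k : ℕ → R) (i r : ℕ) : R :=
  ((List.range' (i + 1) (r - i)).map k).prod

/-- The reduced `(r+1) × r` matrix `L̃(x)` (rows `0,…,r`, columns `0,…,r−1`):
`L̃_{00} = 1`; `L̃_{0j} = a_{j+1}` for `1 ≤ j ≤ r−1`; `L̃_{10} = x·k_2⋯k_r`;
`L̃_{i0} = x·a†_i·k_{i+1}⋯k_r` for `2 ≤ i ≤ r`; `L̃_{i,i−1} = x·k_{i+1}⋯k_r` for `2 ≤ i ≤ r`;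
`L̃_{ij} = x·a_{j+1}·a†_i·k_{i+1}⋯k_r` for `1 ≤ j+1 < i ≤ r`; `L̃_{ij} = 0` otherwise. -/
def Ltil {F R : Type*} [Field F] [Ring R] [Algebra F R]
    (r : ℕ) (a ad k : ℕ → R) (x : F) :
    Matrix (Fin (r + 1)) (Fin r) R :=
  fun i j =>
    if i.val = 0 then (if j.val = 0 then 1 else a (j.val + 1))
    else if j.val = 0 then
      (if i.val = 1 then x • kprod k 1 r else x • (ad i.val * kprod k i.val r))
    else if i.val = j.val + 1 then x • kprod k i.val r
    else if j.val + 1 < i.val then x • (a (j.val + 1) * ad i.val * kprod k i.val r)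
    else 0

section TCrS
variable {F R : Type*} [Field F] [Ring R] [Algebra F R]

def TCr (t : F) (u v : R) : Prop := u * v = t • (v * u)

lemma TCr.mul_right {t : F} {u v w : R} (h : TCr t u w) (h' : Commute v w) :
    TCr t (u * v) w := by
  unfold TCr at *
  rw [mul_assoc, h'.eq, ← mul_assoc, h, smul_mul_assoc, mul_assoc]

lemma TCr.mul_right' {t : F} {u v w : R} (h : Commute u w) (h' : TCr t v w) :
    TCr t (u * v) w := by
  unfold TCr at *
  rw [mul_assoc, h', mul_smul_comm, ← mul_assoc, h.eq, mul_assoc]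

lemma TCr.right_mul {t : F} {u v w : R} (h : TCr t u v) (h' : Commute u w) :
    TCr t u (v * w) := by
  unfold TCr at *
  rw [← mul_assoc, h, smul_mul_assoc, mul_assoc, h'.eq, ← mul_assoc]

lemma TCr.right_mul' {t : F} {u v w : R} (h : Commute u v) (h' : TCr t u w) :
    TCr t u (v * w) := by
  unfold TCr at *
  rw [← mul_assoc, h.eq, mul_assoc, h', mul_smul_comm, ← mul_assoc]

lemma TCr.flip {t : F} (ht : t ≠ 0) {u v : R} (h : TCr t u v) : TCr t⁻¹ v u := by
  unfold TCr at *
  rw [h, smul_smul, inv_mul_cancel₀ ht, one_smul]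

lemma TCr.of_flip {t : F} (ht : t ≠ 0) {u v : R} (h : TCr t⁻¹ u v) : TCr t v u := by
  unfold TCr at *
  rw [h, smul_smul, mul_inv_cancel₀ ht, one_smul]

/-- `u * (v * w) = v * (u * w)` when `u, v` commute. -/
lemma Commute.lcomm {u v : R} (h : Commute u v) (w : R) : u * (v * w) = v * (u * w) := by
  rw [← mul_assoc, h.eq, mul_assoc]

/-- `u * (v * w) = t • (v * (u * w))` when `TCr t u v`. -/
lemma TCr.lcomm {t : F} {u v : R} (h : TCr t u v) (w : R) :
    u * (v * w) = t • (v * (u * w)) := by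
  rw [← mul_assoc, h, smul_mul_assoc, mul_assoc]

lemma comm_of_cross_cross {t : F} (ht : t ≠ 0) {u v w : R}
    (h1 : TCr t v u) (h2 : TCr t u w) : Commute u (v * w) := by
  have hu : u * v = t⁻¹ • (v * u) := by
    rw [h1, smul_smul, inv_mul_cancel₀ ht, one_smul]
  show u * (v * w) = (v * w) * u
  rw [← mul_assoc, hu, smul_mul_assoc, mul_assoc, h2, mul_smul_comm, smul_smul,
    inv_mul_cancel₀ ht, one_smul, ← mul_assoc]

end TCrS

section kprodS
variable {F R : Type*} [Field F] [Ring R] [Algebra F R] (k : ℕ → R)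

lemma kprod_one {i r : ℕ} (h : r ≤ i) : kprod k i r = 1 := by
  unfold kprod
  rw [Nat.sub_eq_zero_of_le h]
  simp

lemma kprod_cons {i r : ℕ} (h : i < r) : kprod k i r = k (i + 1) * kprod k (i + 1) r := by
  unfold kprod
  have h1 : r - i = (r - (i+1)) + 1 := by omega
  rw [h1, List.range'_succ]
  simp

lemma commute_kprod {u : R} {i r : ℕ} (h : ∀ m, i + 1 ≤ m → m ≤ r → Commute u (k m)) :
    Commute u (kprod k i r) := by
  by_cases hir : r ≤ i
  · rw [kprod_one k hir]; exact Commute.one_right u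
  · push_neg at hir
    rw [kprod_cons k hir]
    have : Commute u (kprod k (i+1) r) := by
      have := commute_kprod (u := u) (i := i+1) (r := r) (fun m h1 h2 => h m (by omega) h2)
      exact this
    exact (h (i+1) le_rfl (by omega)).mul_right this
termination_by r - i
decreasing_by omega

lemma TCr.kprod_of {t : F} {u : R} {i r s : ℕ} (hs1 : i + 1 ≤ s) (hs2 : s ≤ r)
    (hcr : TCr t u (k s)) (hco : ∀ m, i + 1 ≤ m → m ≤ r → m ≠ s → Commute u (k m)) :
    TCr t u (kprod k i r) := by
  have hir : i < r := by omega
  rw [kprod_cons k hir]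
  rcases eq_or_ne (i+1) s with h | h
  · subst h
    exact hcr.right_mul (commute_kprod k (fun m h1 h2 => hco m (by omega) h2 (by omega)))
  · have : TCr t u (kprod k (i+1) r) :=
      TCr.kprod_of (by omega) hs2 hcr (fun m h1 h2 h3 => hco m (by omega) h2 h3)
    exact TCr.right_mul' (hco (i+1) le_rfl (by omega) h) this
termination_by r - i
decreasing_by omega

end kprodS

section Osc

variable {F R : Type*} [Field F] [Ring R] [Algebra F R]
variable {t : F} {r : ℕ} {a ad k : ℕ → R}

/-- unscaled entries of `L̃`. -/
def Mentry (r : ℕ) (a ad k : ℕ → R) (i c : ℕ) : R :=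
  if i = 0 then (if c = 0 then 1 else a (c + 1))
  else if c + 1 = i then kprod k i r
  else if c = 0 then ad i * kprod k i r
  else if c + 1 < i then a (c + 1) * ad i * kprod k i r
  else 0

variable (ht : t ≠ 0) (hr : 2 ≤ r)
variable (hosc : ∀ i, 2 ≤ i → i ≤ r → IsOscTriple t (a i) (ad i) (k i))
variable (hcomm : ∀ i j, 2 ≤ i → i ≤ r → 2 ≤ j → j ≤ r → i ≠ j →
      ∀ u ∈ [a i, ad i, k i], ∀ v ∈ [a j, ad j, k j], Commute u v)

section entries
-- entry shapes
lemma Mentry_zero_row0_col0 : Mentry r a ad k 0 0 = (1 : R) := by simp [Mentry]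

lemma Mentry_row0 {c : ℕ} (hc : 1 ≤ c) : Mentry r a ad k 0 c = a (c + 1) := by
  simp [Mentry]; omega

lemma Mentry_zero_of {p c : ℕ} (hp : 1 ≤ p) (hpc : p ≤ c) : Mentry r a ad k p c = 0 := by
  simp only [Mentry]
  rw [if_neg (by omega), if_neg (by omega), if_neg (by omega), if_neg (by omega)]

lemma Mentry_k {p c : ℕ} (hp : 1 ≤ p) (hpc : c + 1 = p) :
    Mentry r a ad k p c = kprod k p r := by
  simp only [Mentry]
  rw [if_neg (by omega), if_pos hpc]

lemma Mentry_mid {p c : ℕ} (hcp : c < p) (hne : c + 1 ≠ p) :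
    Mentry r a ad k p c = Mentry r a ad k 0 c * (ad p * kprod k p r) := by
  rcases Nat.eq_zero_or_pos c with hc | hc
  · subst hc
    rw [Mentry_zero_row0_col0, one_mul]
    simp only [Mentry]
    rw [if_neg (show ¬ p = 0 by omega), if_neg hne, if_pos trivial]
  · rw [Mentry_row0 hc]
    simp only [Mentry]
    rw [if_neg (show ¬ p = 0 by omega), if_neg hne, if_neg (show ¬ c = 0 by omega),
      if_pos (show c + 1 < p by omega), mul_assoc]
end entries

section base

include hcomm in
lemma gen_comm {u v : R} {s s' : ℕ} (h2 : 2 ≤ s) (hsr : s ≤ r) (h2' : 2 ≤ s')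
    (hs'r : s' ≤ r) (hne : s ≠ s')
    (hu : u ∈ [a s, ad s, k s]) (hv : v ∈ [a s', ad s', k s']) : Commute u v :=
  hcomm s s' h2 hsr h2' hs'r hne u hu v hv

include hcomm in
lemma caa {s s' : ℕ} (h2 : 2 ≤ s) (hsr : s ≤ r) (h2' : 2 ≤ s') (hs'r : s' ≤ r) :
    Commute (a s) (a s') := by
  rcases eq_or_ne s s' with h | h
  · subst h; exact Commute.refl _
  · exact gen_comm hcomm h2 hsr h2' hs'r h (by simp) (by simp)

include hcomm in
lemma cdd {s s' : ℕ} (h2 : 2 ≤ s) (hsr : s ≤ r) (h2' : 2 ≤ s') (hs'r : s' ≤ r) :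
    Commute (ad s) (ad s') := by
  rcases eq_or_ne s s' with h | h
  · subst h; exact Commute.refl _
  · exact gen_comm hcomm h2 hsr h2' hs'r h (by simp) (by simp)

include hcomm in
lemma ckk {s s' : ℕ} (h2 : 2 ≤ s) (hsr : s ≤ r) (h2' : 2 ≤ s') (hs'r : s' ≤ r) :
    Commute (k s) (k s') := by
  rcases eq_or_ne s s' with h | h
  · subst h; exact Commute.refl _
  · exact gen_comm hcomm h2 hsr h2' hs'r h (by simp) (by simp)

include hcomm in
lemma cad {s s' : ℕ} (h2 : 2 ≤ s) (hsr : s ≤ r) (h2' : 2 ≤ s') (hs'r : s' ≤ r)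
    (hne : s ≠ s') : Commute (a s) (ad s') :=
  gen_comm hcomm h2 hsr h2' hs'r hne (by simp) (by simp)

include hcomm in
lemma cak {s s' : ℕ} (h2 : 2 ≤ s) (hsr : s ≤ r) (h2' : 2 ≤ s') (hs'r : s' ≤ r)
    (hne : s ≠ s') : Commute (a s) (k s') :=
  gen_comm hcomm h2 hsr h2' hs'r hne (by simp) (by simp)

include hcomm in
lemma cdk {s s' : ℕ} (h2 : 2 ≤ s) (hsr : s ≤ r) (h2' : 2 ≤ s') (hs'r : s' ≤ r)
    (hne : s ≠ s') : Commute (ad s) (k s') :=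
  gen_comm hcomm h2 hsr h2' hs'r hne (by simp) (by simp)

include hosc in
lemma tak {s : ℕ} (h2 : 2 ≤ s) (hsr : s ≤ r) : TCr t (a s) (k s) :=
  (hosc s h2 hsr).1

include hosc ht in
lemma tkd {s : ℕ} (h2 : 2 ≤ s) (hsr : s ≤ r) : TCr t (k s) (ad s) :=
  TCr.of_flip ht (hosc s h2 hsr).2.1

include hosc ht in
lemma key_da {s : ℕ} (h2 : 2 ≤ s) (hsr : s ≤ r) :
    t • (ad s * a s) = (t - 1) • (1 : R) + a s * ad s := by
  rw [(hosc s h2 hsr).2.2.2, (hosc s h2 hsr).2.2.1]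
  rw [smul_sub, smul_smul, mul_inv_cancel₀ ht, one_smul]
  match_scalars <;> ring

include hosc ht in
lemma key_ad {s : ℕ} (h2 : 2 ≤ s) (hsr : s ≤ r) :
    a s * ad s = t • (ad s * a s) + (1 - t) • (1 : R) := by
  rw [(hosc s h2 hsr).2.2.1, (hosc s h2 hsr).2.2.2]
  rw [smul_sub, smul_smul, mul_inv_cancel₀ ht, one_smul]
  match_scalars <;> ring

include hcomm in
lemma c_a_K {s i : ℕ} (h2 : 2 ≤ s) (hsr : s ≤ r) (hi : 1 ≤ i) (hsi : s ≤ i) :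
    Commute (a s) (kprod k i r) :=
  commute_kprod k (fun m h1 h2' => cak hcomm h2 hsr (by omega) h2' (by omega))

include hcomm in
lemma c_ad_K {s i : ℕ} (h2 : 2 ≤ s) (hsr : s ≤ r) (hi : 1 ≤ i) (hsi : s ≤ i) :
    Commute (ad s) (kprod k i r) :=
  commute_kprod k (fun m h1 h2' => cdk hcomm h2 hsr (by omega) h2' (by omega))

include hcomm in
lemma c_k_K {s i : ℕ} (h2 : 2 ≤ s) (hsr : s ≤ r) (hi : 1 ≤ i) :
    Commute (k s) (kprod k i r) :=
  commute_kprod k (fun m h1 h2' => ckk hcomm h2 hsr (by omega) h2')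

include hcomm in
lemma c_K_K {i i' : ℕ} (hi : 1 ≤ i) (hi' : 1 ≤ i') :
    Commute (kprod k i r) (kprod k i' r) :=
  commute_kprod k (fun m h1 h2' => (c_k_K hcomm (by omega) h2' hi).symm)

include hcomm hosc in
lemma t_a_K {s i : ℕ} (h2 : 2 ≤ s) (hsr : s ≤ r) (hi : 1 ≤ i) (his : i < s) :
    TCr t (a s) (kprod k i r) :=
  TCr.kprod_of k (by omega) hsr (tak hosc h2 hsr)
    (fun m h1 h2' h3 => cak hcomm h2 hsr (by omega) h2' (by omega))

include hcomm hosc ht in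
lemma t_K_ad {s i : ℕ} (h2 : 2 ≤ s) (hsr : s ≤ r) (hi : 1 ≤ i) (his : i < s) :
    TCr t (kprod k i r) (ad s) := by
  refine TCr.of_flip ht ?_
  exact TCr.kprod_of k (by omega) hsr (hosc s h2 hsr).2.1
    (fun m h1 h2' h3 => (cdk hcomm h2 hsr (by omega) h2' (by omega)))

-- facts about E c := Mentry 0 c
include hcomm in
lemma cE_a {c s : ℕ} (hc : c < r) (h2 : 2 ≤ s) (hsr : s ≤ r) :
    Commute (Mentry r a ad k 0 c) (a s) := by
  rcases Nat.eq_zero_or_pos c with h | h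
  · rw [h, Mentry_zero_row0_col0]; exact Commute.one_left _
  · rw [Mentry_row0 h]; exact caa hcomm (by omega) (by omega) h2 hsr

include hcomm in
lemma cE_ad {c s : ℕ} (hc : c < r) (h2 : 2 ≤ s) (hsr : s ≤ r) (hne : c + 1 ≠ s) :
    Commute (Mentry r a ad k 0 c) (ad s) := by
  rcases Nat.eq_zero_or_pos c with h | h
  · rw [h, Mentry_zero_row0_col0]; exact Commute.one_left _
  · rw [Mentry_row0 h]; exact cad hcomm (by omega) (by omega) h2 hsr hne

include hcomm in
lemma cE_K {c i : ℕ} (hc : c < r) (hi : 1 ≤ i) (hci : c < i) :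
    Commute (Mentry r a ad k 0 c) (kprod k i r) := by
  rcases Nat.eq_zero_or_pos c with h | h
  · rw [h, Mentry_zero_row0_col0]; exact Commute.one_left _
  · rw [Mentry_row0 h]; exact c_a_K hcomm (by omega) (by omega) hi (by omega)

include hcomm hosc in
lemma tE_K {c i : ℕ} (h1c : 1 ≤ c) (hc : c < r) (hi : 1 ≤ i) (hic : i ≤ c) :
    TCr t (Mentry r a ad k 0 c) (kprod k i r) := by
  rw [Mentry_row0 h1c]
  exact t_a_K hosc hcomm (by omega) (by omega) hi (by omega)

include hcomm in
lemma cE_E {c d : ℕ} (hc : c < r) (hd : d < r) :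
    Commute (Mentry r a ad k 0 c) (Mentry r a ad k 0 d) := by
  rcases Nat.eq_zero_or_pos d with h | h
  · rw [h, Mentry_zero_row0_col0]; exact Commute.one_right _
  · rw [Mentry_row0 h]; exact cE_a hcomm hc (by omega) (by omega)

end base

section ML
variable (ht : t ≠ 0) (hr : 2 ≤ r)
variable (hosc : ∀ i, 2 ≤ i → i ≤ r → IsOscTriple t (a i) (ad i) (k i))
variable (hcomm : ∀ i j, 2 ≤ i → i ≤ r → 2 ≤ j → j ≤ r → i ≠ j →
      ∀ u ∈ [a i, ad i, k i], ∀ v ∈ [a j, ad j, k j], Commute u v)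

include ht hosc hcomm

lemma t_K_M {p q d : ℕ} (hp : 1 ≤ p) (hpq : p < q) (hq : q ≤ r) (hdq : d + 1 < q)
    (hdp : d < p) (hdr : d < r) :
    TCr t (kprod k p r) (Mentry r a ad k q d) := by
  rw [Mentry_mid (show d < q by omega) (by omega)]
  refine TCr.right_mul' ((cE_K hcomm hdr hp hdp).symm) ?_
  exact TCr.right_mul (t_K_ad ht hosc hcomm (by omega) hq hp hpq)
    (c_K_K hcomm hp (by omega))

omit ht hosc in
lemma cE_M {c q d : ℕ} (hcr : c < r) (hq1 : 1 ≤ q) (hq : q ≤ r) (hdr : d < r)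
    (hcq : c < q) (himp : c + 1 = q → d + 1 = q) :
    Commute (Mentry r a ad k 0 c) (Mentry r a ad k q d) := by
  by_cases hdq : q ≤ d
  · rw [Mentry_zero_of hq1 hdq]; exact Commute.zero_right _
  push_neg at hdq
  by_cases hk : d + 1 = q
  · rw [Mentry_k hq1 hk]
    exact cE_K hcomm hcr hq1 hcq
  · rw [Mentry_mid hdq hk]
    refine (cE_E hcomm hcr hdr).mul_right ?_
    refine (cE_ad hcomm hcr (by omega) hq (fun h => hk (himp h))).mul_right ?_
    exact cE_K hcomm hcr hq1 hcq

omit ht hosc in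
lemma c_ad_M {p q d : ℕ} (h2p : 2 ≤ p) (hpq : p ≤ q) (hq : q ≤ r) (hdr : d < r)
    (hdp : d + 1 = p → d + 1 = q) :
    Commute (ad p) (Mentry r a ad k q d) := by
  by_cases hdq : q ≤ d
  · rw [Mentry_zero_of (by omega) hdq]; exact Commute.zero_right _
  push_neg at hdq
  by_cases hk : d + 1 = q
  · rw [Mentry_k (by omega) hk]
    exact c_ad_K hcomm h2p (by omega) (by omega) hpq
  · rw [Mentry_mid hdq hk]
    refine ((cE_ad hcomm hdr h2p (by omega) (fun h => hk (hdp h))).symm).mul_right ?_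
    refine (cdd hcomm h2p (by omega) (by omega) hq).mul_right ?_
    exact c_ad_K hcomm h2p (by omega) (by omega) hpq

omit ht hosc in
lemma c_K_M_same {i d : ℕ} (hi : 1 ≤ i) (hir : i ≤ r) (hdr : d < r) :
    Commute (kprod k i r) (Mentry r a ad k i d) := by
  by_cases hdq : i ≤ d
  · rw [Mentry_zero_of hi hdq]; exact Commute.zero_right _
  push_neg at hdq
  by_cases hk : d + 1 = i
  · rw [Mentry_k hi hk]
  · rw [Mentry_mid hdq hk]
    refine ((cE_K hcomm hdr hi hdq).symm).mul_right ?_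
    refine ((c_ad_K hcomm (by omega) hir hi le_rfl).symm).mul_right ?_
    exact Commute.refl _

omit ht hosc in
lemma Mrow_comm {i c d : ℕ} (hir : i ≤ r) (hc : c < r) (hd : d < r) :
    Commute (Mentry r a ad k i c) (Mentry r a ad k i d) := by
  rcases Nat.eq_zero_or_pos i with hi | hi
  · subst hi; exact cE_E hcomm hc hd
  by_cases hcp : i ≤ c
  · rw [Mentry_zero_of hi hcp]; exact Commute.zero_left _
  push_neg at hcp
  by_cases hk : c + 1 = i
  · rw [Mentry_k hi hk]; exact c_K_M_same hcomm hi hir hd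
  · rw [Mentry_mid hcp hk]
    refine Commute.mul_left ?_ ?_
    · exact cE_M hcomm hc hi hir hd hcp (fun h => absurd h hk)
    refine Commute.mul_left ?_ ?_
    · exact c_ad_M hcomm (by omega) le_rfl hir hd (fun h => h)
    · exact c_K_M_same hcomm hi hir hd

lemma ML1 {p q c d : ℕ} (hp : 1 ≤ p) (hpq : p < q) (hq : q ≤ r) (hdc : d ≤ c)
    (hcr : c < r) :
    Mentry r a ad k p c * Mentry r a ad k q d
      = t • (Mentry r a ad k q d * Mentry r a ad k p c) := by
  by_cases hcp : p ≤ c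
  · rw [Mentry_zero_of hp hcp]; simp
  push_neg at hcp
  have hdr : d < r := by omega
  have hdq : d + 1 < q := by omega
  show TCr t _ _
  by_cases hk : c + 1 = p
  · rw [Mentry_k hp hk]
    exact t_K_M ht hosc hcomm hp hpq hq hdq (by omega) hdr
  · rw [Mentry_mid hcp hk]
    refine TCr.mul_right' (cE_M hcomm hcr (by omega) hq hdr (by omega) (by omega)) ?_
    refine TCr.mul_right' (c_ad_M hcomm (by omega) (by omega) hq hdr (fun h => absurd h (by omega))) ?_
    exact t_K_M ht hosc hcomm hp hpq hq hdq (by omega) hdr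

omit ht hosc in
lemma ML3 {q c d : ℕ} (hq1 : 1 ≤ q) (hq : q ≤ r) (hcd : c ≤ d) (hdr : d < r)
    (hcr : c < r) :
    Commute (Mentry r a ad k 0 c) (Mentry r a ad k q d) := by
  by_cases hdq : q ≤ d
  · rw [Mentry_zero_of hq1 hdq]; exact Commute.zero_right _
  push_neg at hdq
  exact cE_M hcomm hcr hq1 hq hdr (by omega) (by omega)

omit hcomm in
lemma key_da' {s : ℕ} (h2 : 2 ≤ s) (hsr : s ≤ r) (W : R) :
    (ad s * a s) * W = (t⁻¹ * (t - 1)) • W + t⁻¹ • ((a s * ad s) * W) := by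
  have h := key_da ht hosc h2 hsr
  have h2' : ad s * a s = (t⁻¹ * (t - 1)) • (1 : R) + t⁻¹ • (a s * ad s) := by
    calc ad s * a s = t⁻¹ • (t • (ad s * a s)) := by
          rw [smul_smul, inv_mul_cancel₀ ht, one_smul]
    _ = _ := by rw [h, smul_add, smul_smul]
  rw [h2', add_mul, smul_mul_assoc, smul_mul_assoc, one_mul]

omit hcomm in
lemma key_ad' {s : ℕ} (h2 : 2 ≤ s) (hsr : s ≤ r) (W : R) :
    (a s * ad s) * W = t • ((ad s * a s) * W) + (1 - t) • W := by
  rw [key_ad ht hosc h2 hsr, add_mul, smul_mul_assoc, smul_mul_assoc, one_mul]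

/-- normalization: `(E_c ad_p K_p)(E_d ad_q K_q) = t • (E_c E_d ad_p ad_q K_p K_q)`. -/
lemma norm_mid_mid {p q c d : ℕ} (hp2 : 2 ≤ p) (hpq : p < q) (hq : q ≤ r)
    (hcr : c < r) (hdr : d < r) (hdp : d < p) (hdp1 : d + 1 ≠ p) :
    (Mentry r a ad k 0 c * (ad p * kprod k p r)) *
      (Mentry r a ad k 0 d * (ad q * kprod k q r))
      = t • (Mentry r a ad k 0 c * (Mentry r a ad k 0 d *
          (ad p * (ad q * (kprod k p r * kprod k q r))))) := by
  rw [mul_assoc, mul_assoc]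
  rw [((cE_K hcomm hdr (by omega) hdp).symm).lcomm]
  rw [(t_K_ad ht hosc hcomm (by omega) hq (by omega) hpq).lcomm]
  rw [((cE_ad hcomm hdr hp2 (by omega) hdp1).symm).lcomm]
  simp only [mul_smul_comm]

/-- normalization: `(E_c ad_p K_p)(a_p ad_q K_q) = t • (E_c ad_p a_p ad_q K_p K_q)`. -/
lemma norm_mid_p {p q c : ℕ} (hp2 : 2 ≤ p) (hpq : p < q) (hq : q ≤ r) (hcr : c < r) :
    (Mentry r a ad k 0 c * (ad p * kprod k p r)) * (a p * (ad q * kprod k q r))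
      = t • (Mentry r a ad k 0 c *
          (ad p * (a p * (ad q * (kprod k p r * kprod k q r))))) := by
  rw [mul_assoc, mul_assoc]
  rw [((c_a_K hcomm hp2 (by omega) (by omega) le_rfl).symm).lcomm]
  rw [(t_K_ad ht hosc hcomm (by omega) hq (by omega) hpq).lcomm]
  simp only [mul_smul_comm]

omit ht hosc in
/-- normalization: `(a_p ad_q K_q)(E_c ad_p K_p) = E_c a_p ad_p ad_q K_p K_q`. -/
lemma norm_p_mid {p q c : ℕ} (hp2 : 2 ≤ p) (hpq : p < q) (hq : q ≤ r) (hcr : c < r)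
    (hcq : c < q) (hcq1 : c + 1 ≠ q) (hcp1 : c + 1 ≠ p) :
    (a p * (ad q * kprod k q r)) * (Mentry r a ad k 0 c * (ad p * kprod k p r))
      = Mentry r a ad k 0 c *
          (a p * (ad p * (ad q * (kprod k p r * kprod k q r)))) := by
  rw [mul_assoc, mul_assoc]
  rw [((cE_K hcomm hcr (by omega) hcq).symm).lcomm]
  rw [((c_ad_K hcomm hp2 (by omega) (by omega) (le_of_lt hpq)).symm).lcomm]
  rw [(c_K_K hcomm (by omega) (by omega)).eq]
  rw [((cE_ad hcomm hcr (by omega) hq hcq1).symm).lcomm]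
  rw [((cE_a hcomm hcr hp2 (by omega)).symm).lcomm]
  rw [(cdd hcomm (by omega) hq hp2 (by omega)).lcomm]

lemma norm_Kp_mid {p q c : ℕ} (hp1 : 1 ≤ p) (hpq : p < q) (hq : q ≤ r) (hcr : c < r)
    (hcp : c < p) :
    kprod k p r * (Mentry r a ad k 0 c * (ad q * kprod k q r))
      = t • (Mentry r a ad k 0 c * (ad q * (kprod k p r * kprod k q r))) := by
  rw [((cE_K hcomm hcr hp1 hcp).symm).lcomm]
  rw [(t_K_ad ht hosc hcomm (by omega) hq hp1 hpq).lcomm]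
  simp only [mul_smul_comm]

lemma ML2 {p q c d : ℕ} (hp : 1 ≤ p) (hpq : p < q) (hq : q ≤ r) (hcd : c < d)
    (hdr : d < r) :
    t • (Mentry r a ad k p c * Mentry r a ad k q d)
      = (t - 1) • (Mentry r a ad k p d * Mentry r a ad k q c)
        + t • (Mentry r a ad k q d * Mentry r a ad k p c) := by
  have hq2 : 2 ≤ q := by omega
  have hcr : c < r := by omega
  by_cases hcp : p ≤ c
  · rw [Mentry_zero_of hp hcp, Mentry_zero_of hp (by omega)]; simp
  push_neg at hcp
  by_cases hdq : q ≤ d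
  · rw [Mentry_zero_of (p := p) (c := d) hp (by omega), Mentry_zero_of (p := q) (c := d) (by omega) hdq]
    simp
  push_neg at hdq
  by_cases hpd : p ≤ d
  · -- `M p d = 0` and `M p c` commutes with `M q d`
    rw [Mentry_zero_of hp hpd]
    have hco : Commute (Mentry r a ad k p c) (Mentry r a ad k q d) := by
      by_cases hk : d + 1 = q
      · -- M q d = K q
        rw [Mentry_k (by omega) hk]
        by_cases hkp : c + 1 = p
        · rw [Mentry_k hp hkp]; exact c_K_K hcomm hp (by omega)
        · rw [Mentry_mid hcp hkp]
          refine Commute.mul_left (cE_K hcomm hcr (by omega) (by omega)) ?_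
          exact Commute.mul_left
            (c_ad_K hcomm (by omega) (by omega) (by omega) hpq.le)
            (c_K_K hcomm hp (by omega))
      · rw [Mentry_mid hdq hk]
        have hKp : Commute (kprod k p r)
            (Mentry r a ad k 0 d * (ad q * kprod k q r)) := by
          refine comm_of_cross_cross ht ?_ ?_
          · exact tE_K hosc hcomm (by omega) hdr hp hpd
          · exact TCr.right_mul (t_K_ad ht hosc hcomm hq2 hq hp hpq)
              (c_K_K hcomm hp (by omega))
        by_cases hkp : c + 1 = p
        · rw [Mentry_k hp hkp]; exact hKp
        · rw [Mentry_mid hcp hkp]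
          refine Commute.mul_left ?_ (Commute.mul_left ?_ hKp)
          · refine Commute.mul_right (cE_E hcomm hcr hdr) ?_
            exact Commute.mul_right
              (cE_ad hcomm hcr hq2 hq (by omega)) (cE_K hcomm hcr (by omega) (by omega))
          · refine Commute.mul_right ((cE_ad hcomm hdr (by omega) (by omega)
              (by omega)).symm) ?_
            exact Commute.mul_right (cdd hcomm (by omega) (by omega) hq2 hq)
              (c_ad_K hcomm (by omega) (by omega) (by omega) hpq.le)
    rw [hco.eq]
    simp
  push_neg at hpd
  -- main case: c < d < p < q
  have hd1 : 1 ≤ d := by omega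
  have hp2 : 2 ≤ p := by omega
  have hqc : Mentry r a ad k q c
      = Mentry r a ad k 0 c * (ad q * kprod k q r) :=
    Mentry_mid (by omega) (by omega)
  have hqd : Mentry r a ad k q d
      = Mentry r a ad k 0 d * (ad q * kprod k q r) :=
    Mentry_mid (by omega) (by omega)
  have hpc : Mentry r a ad k p c
      = Mentry r a ad k 0 c * (ad p * kprod k p r) :=
    Mentry_mid (by omega) (by omega)
  by_cases hk : d + 1 = p
  · -- A-case: M p d = K p, E d = a p
    have hEd : Mentry r a ad k 0 d = a p := by rw [Mentry_row0 hd1, hk]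
    rw [Mentry_k hp hk, hqc, hqd, hpc, hEd]
    rw [norm_mid_p ht hosc hcomm hp2 hpq hq hcr]
    rw [norm_Kp_mid ht hosc hcomm hp hpq hq hcr hcp]
    rw [norm_p_mid hcomm hp2 hpq hq hcr (by omega) (by omega) (by omega)]
    rw [← mul_assoc (ad p) (a p), ← mul_assoc (a p) (ad p)]
    rw [key_da' ht hosc hp2 (by omega : p ≤ r)]
    simp only [mul_add, mul_smul_comm, smul_add, smul_smul]
    match_scalars <;> (field_simp; try ring)
  · -- B-case
    have hpd' : Mentry r a ad k p d
        = Mentry r a ad k 0 d * (ad p * kprod k p r) := Mentry_mid hpd hk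
    rw [hqc, hqd, hpc, hpd']
    have hXa := norm_mid_mid ht hosc hcomm hp2 hpq hq hcr hdr hpd hk
    have hXb := norm_mid_mid ht hosc hcomm (c := d) (d := c) hp2 hpq hq hdr hcr
      (by omega) (by omega)
    have hT : (Mentry r a ad k 0 c * (ad p * kprod k p r)) *
        (Mentry r a ad k 0 d * (ad q * kprod k q r))
        = t • ((Mentry r a ad k 0 d * (ad q * kprod k q r)) *
            (Mentry r a ad k 0 c * (ad p * kprod k p r))) := by
      show TCr t _ _
      refine TCr.mul_right' ?_ (TCr.mul_right' ?_ ?_)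
      · refine Commute.mul_right (cE_E hcomm hcr hdr) ?_
        exact Commute.mul_right (cE_ad hcomm hcr hq2 hq (by omega))
          (cE_K hcomm hcr (by omega) (by omega))
      · refine Commute.mul_right ((cE_ad hcomm hdr hp2 (by omega) hk).symm) ?_
        exact Commute.mul_right (cdd hcomm hp2 (by omega) hq2 hq)
          (c_ad_K hcomm hp2 (by omega) (by omega) hpq.le)
      · refine TCr.right_mul' ((cE_K hcomm hdr hp hpd).symm) ?_
        exact TCr.right_mul (t_K_ad ht hosc hcomm hq2 hq hp hpq)
          (c_K_K hcomm hp (by omega))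
    have hX : (Mentry r a ad k 0 d * (ad p * kprod k p r)) *
        (Mentry r a ad k 0 c * (ad q * kprod k q r))
        = (Mentry r a ad k 0 c * (ad p * kprod k p r)) *
            (Mentry r a ad k 0 d * (ad q * kprod k q r)) := by
      rw [hXa, hXb, (cE_E hcomm hdr hcr).lcomm]
    rw [hX, ← hT]
    match_scalars <;> ring

lemma ML4 {q c d : ℕ} (hq1 : 1 ≤ q) (hq : q ≤ r) (hdc : d < c) (hcr : c < r) :
    Mentry r a ad k 0 c * Mentry r a ad k q d
      = t • (Mentry r a ad k q d * Mentry r a ad k 0 c)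
        + (1 - t) • (Mentry r a ad k 0 d * Mentry r a ad k q c) := by
  have hc1 : 1 ≤ c := by omega
  have hdr : d < r := by omega
  by_cases hdq : q ≤ d
  · rw [Mentry_zero_of hq1 hdq, Mentry_zero_of hq1 (by omega)]; simp
  push_neg at hdq
  by_cases hcq : q ≤ c
  · -- M q c = 0, TCr t E_c (M q d)
    rw [Mentry_zero_of hq1 hcq]
    have hT : TCr t (Mentry r a ad k 0 c) (Mentry r a ad k q d) := by
      by_cases hk : d + 1 = q
      · rw [Mentry_k hq1 hk]
        exact tE_K hosc hcomm hc1 hcr hq1 hcq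
      · rw [Mentry_mid hdq hk]
        refine TCr.right_mul' (cE_E hcomm hcr hdr) ?_
        refine TCr.right_mul' (cE_ad hcomm hcr (by omega) hq (by omega)) ?_
        exact tE_K hosc hcomm hc1 hcr hq1 hcq
    rw [hT]
    simp
  push_neg at hcq
  have hq2 : 2 ≤ q := by omega
  have hqd' : Mentry r a ad k q d
      = Mentry r a ad k 0 d * (ad q * kprod k q r) :=
    Mentry_mid hdq (by omega)
  by_cases hk : c + 1 = q
  · -- M q c = K q, E c = a q
    have hEc : Mentry r a ad k 0 c = a q := by rw [Mentry_row0 hc1, hk]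
    rw [Mentry_k hq1 hk, hqd', hEc]
    have h1 : a q * (Mentry r a ad k 0 d * (ad q * kprod k q r))
        = Mentry r a ad k 0 d * ((a q * ad q) * kprod k q r) := by
      rw [((cE_a hcomm hdr hq2 hq).symm).lcomm, ← mul_assoc (a q) (ad q)]
    have h2 : (Mentry r a ad k 0 d * (ad q * kprod k q r)) * a q
        = Mentry r a ad k 0 d * ((ad q * a q) * kprod k q r) := by
      rw [mul_assoc, mul_assoc, ← (c_a_K hcomm hq2 hq hq1 le_rfl).eq,
        ← mul_assoc (ad q) (a q)]
    rw [h1, h2, key_ad' ht hosc hq2 hq]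
    simp only [mul_add, mul_smul_comm, smul_add, smul_smul]
  · -- M q c mid, all commute
    have hqc' : Mentry r a ad k q c
        = Mentry r a ad k 0 c * (ad q * kprod k q r) :=
      Mentry_mid hcq hk
    rw [hqd', hqc']
    have hco : Commute (Mentry r a ad k 0 c)
        (Mentry r a ad k 0 d * (ad q * kprod k q r)) := by
      refine Commute.mul_right (cE_E hcomm hcr hdr) ?_
      exact Commute.mul_right (cE_ad hcomm hcr hq2 hq hk)
        (cE_K hcomm hcr hq1 hcq)
    rw [← hco.eq, (cE_E hcomm hdr hcr).lcomm]
    match_scalars <;> ring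

end ML

end Osc

set_option maxHeartbeats 1000000

section Collapse
variable {F R : Type*} [Field F] [Ring R] [Algebra F R]

lemma sumL_lt {N : ℕ} (t x y : F) {i j : Fin N} (hij : i < j) (f : Fin N × Fin N → R) :
    ∑ p : Fin N × Fin N, Rmat N t x y (i, j) p • f p
      = (t * (x - y) / (t * x - y)) • f (j, i) + (x * (t - 1) / (t * x - y)) • f (i, j) := by
  have hij' : i.val < j.val := hij
  have hptw : ∀ p : Fin N × Fin N, Rmat N t x y (i, j) p
      = (if p = (j, i) then t * (x - y) / (t * x - y) else 0)
        + (if p = (i, j) then x * (t - 1) / (t * x - y) else 0) := by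
    intro p
    rcases p with ⟨p1, p2⟩
    simp only [Rmat, Prod.mk.injEq, Fin.ext_iff, Fin.lt_def, true_and, and_true]
    split_ifs <;> first | (exfalso; omega) | ring
  simp only [hptw, add_smul, ite_smul, zero_smul, Finset.sum_add_distrib,
    Finset.sum_ite_eq', Finset.mem_univ, if_true]

lemma sumL_gt {N : ℕ} (t x y : F) {i j : Fin N} (hij : j < i) (f : Fin N × Fin N → R) :
    ∑ p : Fin N × Fin N, Rmat N t x y (i, j) p • f p
      = ((x - y) / (t * x - y)) • f (j, i) + (y * (t - 1) / (t * x - y)) • f (i, j) := by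
  have hij' : j.val < i.val := hij
  have hptw : ∀ p : Fin N × Fin N, Rmat N t x y (i, j) p
      = (if p = (j, i) then (x - y) / (t * x - y) else 0)
        + (if p = (i, j) then y * (t - 1) / (t * x - y) else 0) := by
    intro p
    rcases p with ⟨p1, p2⟩
    simp only [Rmat, Prod.mk.injEq, Fin.ext_iff, Fin.lt_def, true_and, and_true]
    split_ifs <;> first | (exfalso; omega) | ring
  simp only [hptw, add_smul, ite_smul, zero_smul, Finset.sum_add_distrib,
    Finset.sum_ite_eq', Finset.mem_univ, if_true]

lemma sumL_eq {N : ℕ} (t x y : F) (i : Fin N) (f : Fin N × Fin N → R) :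
    ∑ p : Fin N × Fin N, Rmat N t x y (i, i) p • f p = f (i, i) := by
  have hptw : ∀ p : Fin N × Fin N, Rmat N t x y (i, i) p
      = (if p = (i, i) then 1 else 0) := by
    intro p
    rcases p with ⟨p1, p2⟩
    simp only [Rmat, Prod.mk.injEq, Fin.ext_iff, Fin.lt_def, true_and, and_true]
    split_ifs <;> first | (exfalso; omega) | ring
  simp only [hptw, ite_smul, zero_smul, one_smul, Finset.sum_ite_eq',
    Finset.mem_univ, if_true]

lemma sumR_lt {N : ℕ} (t x y : F) {kk ll : Fin N} (hkl : kk < ll) (g : Fin N × Fin N → R) :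
    ∑ q : Fin N × Fin N, Rmat N t x y q (kk, ll) • g q
      = ((x - y) / (t * x - y)) • g (ll, kk) + (x * (t - 1) / (t * x - y)) • g (kk, ll) := by
  have hkl' : kk.val < ll.val := hkl
  have hptw : ∀ q : Fin N × Fin N, Rmat N t x y q (kk, ll)
      = (if q = (ll, kk) then (x - y) / (t * x - y) else 0)
        + (if q = (kk, ll) then x * (t - 1) / (t * x - y) else 0) := by
    intro q
    rcases q with ⟨q1, q2⟩
    simp only [Rmat, Prod.mk.injEq, Fin.ext_iff, Fin.lt_def, true_and, and_true]
    split_ifs <;> first | (exfalso; omega) | ring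
  simp only [hptw, add_smul, ite_smul, zero_smul, Finset.sum_add_distrib,
    Finset.sum_ite_eq', Finset.mem_univ, if_true]

lemma sumR_gt {N : ℕ} (t x y : F) {kk ll : Fin N} (hkl : ll < kk) (g : Fin N × Fin N → R) :
    ∑ q : Fin N × Fin N, Rmat N t x y q (kk, ll) • g q
      = (t * (x - y) / (t * x - y)) • g (ll, kk) + (y * (t - 1) / (t * x - y)) • g (kk, ll) := by
  have hkl' : ll.val < kk.val := hkl
  have hptw : ∀ q : Fin N × Fin N, Rmat N t x y q (kk, ll)
      = (if q = (ll, kk) then t * (x - y) / (t * x - y) else 0)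
        + (if q = (kk, ll) then y * (t - 1) / (t * x - y) else 0) := by
    intro q
    rcases q with ⟨q1, q2⟩
    simp only [Rmat, Prod.mk.injEq, Fin.ext_iff, Fin.lt_def, true_and, and_true]
    split_ifs <;> first | (exfalso; omega) | ring
  simp only [hptw, add_smul, ite_smul, zero_smul, Finset.sum_add_distrib,
    Finset.sum_ite_eq', Finset.mem_univ, if_true]

lemma sumR_eq {N : ℕ} (t x y : F) (kk : Fin N) (g : Fin N × Fin N → R) :
    ∑ q : Fin N × Fin N, Rmat N t x y q (kk, kk) • g q = g (kk, kk) := by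
  have hptw : ∀ q : Fin N × Fin N, Rmat N t x y q (kk, kk)
      = (if q = (kk, kk) then 1 else 0) := by
    intro q
    rcases q with ⟨q1, q2⟩
    simp only [Rmat, Prod.mk.injEq, Fin.ext_iff, Fin.lt_def, true_and, and_true]
    split_ifs <;> first | (exfalso; omega) | ring
  simp only [hptw, ite_smul, zero_smul, one_smul, Finset.sum_ite_eq',
    Finset.mem_univ, if_true]

end Collapse

section Bridge
variable {F R : Type*} [Field F] [Ring R] [Algebra F R]

lemma Ltil_eq (r : ℕ) (a ad k : ℕ → R) (x : F) (i : Fin (r + 1)) (j : Fin r) :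
    Ltil r a ad k x i j
      = (if i.val = 0 then (1 : F) else x) • Mentry r a ad k i.val j.val := by
  by_cases hi : i.val = 0
  · rw [if_pos hi, one_smul]
    by_cases hj : j.val = 0
    · rw [hi, hj, Mentry_zero_row0_col0]
      unfold Ltil
      rw [if_pos hi, if_pos hj]
    · rw [hi, Mentry_row0 (by omega)]
      unfold Ltil
      rw [if_pos hi, if_neg hj]
  · rw [if_neg hi]
    by_cases hj : j.val = 0
    · by_cases h1 : i.val = 1
      · rw [hj, Mentry_k (by omega) (by omega : 0 + 1 = i.val)]
        unfold Ltil
        rw [if_neg hi, if_pos hj, if_pos h1, h1]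
      · have hM : Mentry r a ad k i.val 0 = ad i.val * kprod k i.val r := by
          rw [Mentry_mid (by omega) (by omega), Mentry_zero_row0_col0, one_mul]
        rw [hj, hM]
        unfold Ltil
        rw [if_neg hi, if_pos hj, if_neg h1]
    · by_cases h2 : i.val = j.val + 1
      · rw [Mentry_k (by omega) h2.symm]
        unfold Ltil
        rw [if_neg hi, if_neg hj, if_pos h2]
      · by_cases h3 : j.val + 1 < i.val
        · have hM : Mentry r a ad k i.val j.val
              = a (j.val + 1) * (ad i.val * kprod k i.val r) := by
            rw [Mentry_mid (by omega) (by omega), Mentry_row0 (by omega)]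
          rw [hM]
          unfold Ltil
          rw [if_neg hi, if_neg hj, if_neg h2, if_pos h3, mul_assoc]
        · rw [Mentry_zero_of (by omega) (by omega), smul_zero]
          unfold Ltil
          rw [if_neg hi, if_neg hj, if_neg h2, if_neg h3]

end Bridge

set_option maxHeartbeats 2000000 in
theorem Ltil_satisfies_rank_reducing_YB
    {F R : Type*} [Field F] [Ring R] [Algebra F R]
    (r : ℕ) (hr : 2 ≤ r) (t : F) (ht : t ≠ 0) (a ad k : ℕ → R)
    (hosc : ∀ i, 2 ≤ i → i ≤ r → IsOscTriple t (a i) (ad i) (k i))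
    (hcomm : ∀ i j, 2 ≤ i → i ≤ r → 2 ≤ j → j ≤ r → i ≠ j →
      ∀ u ∈ [a i, ad i, k i], ∀ v ∈ [a j, ad j, k j], Commute u v) :
    ∀ x y : F, t * x ≠ y → ∀ (i j : Fin (r + 1)) (kk ll : Fin r),
      ∑ p : Fin (r + 1) × Fin (r + 1),
          Rmat (r + 1) t x y (i, j) p • (Ltil r a ad k x p.1 kk * Ltil r a ad k y p.2 ll)
      = ∑ q : Fin r × Fin r,
          Rmat r t x y q (kk, ll) • (Ltil r a ad k y i q.1 * Ltil r a ad k x j q.2) := by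
  intro x y hxy i j kk ll
  have hd : t * x - y ≠ 0 := sub_ne_zero_of_ne hxy
  have hir : (i : ℕ) ≤ r := by have := i.isLt; omega
  have hjr : (j : ℕ) ≤ r := by have := j.isLt; omega
  have hkr : (kk : ℕ) < r := kk.isLt
  have hlr : (ll : ℕ) < r := ll.isLt
  rcases lt_trichotomy i j with hij | rfl | hij
  · -- i < j
    have hijv : (i : ℕ) < (j : ℕ) := hij
    have hj0 : ¬ (j : ℕ) = 0 := by omega
    rw [sumL_lt t x y hij]
    rcases lt_trichotomy kk ll with hkl | rfl | hkl
    · -- kk < ll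
      have hklv : (kk : ℕ) < (ll : ℕ) := hkl
      rw [sumR_lt t x y hkl]
      by_cases hi0 : (i : ℕ) = 0
      · simp only [Ltil_eq, hi0, hj0, eq_self_iff_true, if_true, if_false, one_smul,
          smul_mul_assoc, mul_smul_comm, smul_smul]
        rw [ML4 ht hosc hcomm (by omega) hjr hklv hlr]
        simp only [smul_add, smul_smul]
        match_scalars <;> (field_simp; try ring; try tauto)
      · simp only [Ltil_eq, hi0, hj0, eq_self_iff_true, if_true, if_false, one_smul,
          smul_mul_assoc, mul_smul_comm, smul_smul]
        rw [ML1 ht hosc hcomm (by omega) hijv hjr (le_of_lt hklv) hlr]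
        simp only [smul_smul]
        match_scalars <;> (field_simp; try ring; try tauto)
    · -- kk = ll
      rw [sumR_eq t x y kk]
      by_cases hi0 : (i : ℕ) = 0
      · simp only [Ltil_eq, hi0, hj0, eq_self_iff_true, if_true, if_false, one_smul,
          smul_mul_assoc, mul_smul_comm, smul_smul]
        rw [← (ML3 hcomm (by omega) hjr le_rfl hkr hkr).eq]
        match_scalars <;> (field_simp; try ring; try tauto)
      · simp only [Ltil_eq, hi0, hj0, eq_self_iff_true, if_true, if_false, one_smul,
          smul_mul_assoc, mul_smul_comm, smul_smul]
        rw [ML1 ht hosc hcomm (by omega) hijv hjr le_rfl hkr]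
        simp only [smul_smul]
        match_scalars <;> (field_simp; try ring; try tauto)
    · -- ll < kk
      have hklv : (ll : ℕ) < (kk : ℕ) := hkl
      rw [sumR_gt t x y hkl]
      by_cases hi0 : (i : ℕ) = 0
      · simp only [Ltil_eq, hi0, hj0, eq_self_iff_true, if_true, if_false, one_smul,
          smul_mul_assoc, mul_smul_comm, smul_smul]
        rw [← (ML3 hcomm (by omega) hjr (le_of_lt hklv) hkr hlr).eq]
        match_scalars <;> (field_simp; try ring; try tauto)
      · simp only [Ltil_eq, hi0, hj0, eq_self_iff_true, if_true, if_false, one_smul,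
          smul_mul_assoc, mul_smul_comm, smul_smul]
        have hA := congrArg (fun z : R => t⁻¹ • z)
          (ML2 ht hosc hcomm (p := (i : ℕ)) (q := (j : ℕ)) (c := (ll : ℕ)) (d := (kk : ℕ))
            (by omega) hijv hjr hklv hkr)
        simp only [inv_smul_smul₀ ht, smul_add, smul_smul] at hA
        rw [hA]
        simp only [smul_add, smul_smul]
        match_scalars <;> (field_simp; try ring; try tauto)
  · -- i = j
    rw [sumL_eq t x y i]
    rcases lt_trichotomy kk ll with hkl | rfl | hkl
    · rw [sumR_lt t x y hkl]
      simp only [Ltil_eq, smul_mul_assoc, mul_smul_comm, smul_smul]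
      rw [(Mrow_comm hcomm (c := (ll : ℕ)) (d := (kk : ℕ)) hir hlr hkr).eq]
      have hd1 : x * t - y ≠ 0 := by rwa [mul_comm x t]
      have hd2 : -y + x * t ≠ 0 := by rwa [neg_add_eq_sub, mul_comm x t]
      match_scalars <;> (field_simp; try ring; try (split_ifs <;> ring); try tauto)
    · rw [sumR_eq t x y kk]
      simp only [Ltil_eq, smul_mul_assoc, mul_smul_comm, smul_smul]
      match_scalars <;> (field_simp; try ring; try (split_ifs <;> ring); try tauto)
    · rw [sumR_gt t x y hkl]
      simp only [Ltil_eq, smul_mul_assoc, mul_smul_comm, smul_smul]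
      rw [(Mrow_comm hcomm (c := (ll : ℕ)) (d := (kk : ℕ)) hir hlr hkr).eq]
      match_scalars <;> (field_simp; try ring; try (split_ifs <;> ring); try tauto)
  · -- j < i
    have hijv : (j : ℕ) < (i : ℕ) := hij
    have hi0 : ¬ (i : ℕ) = 0 := by omega
    rw [sumL_gt t x y hij]
    rcases lt_trichotomy kk ll with hkl | rfl | hkl
    · -- kk < ll
      have hklv : (kk : ℕ) < (ll : ℕ) := hkl
      rw [sumR_lt t x y hkl]
      by_cases hj0 : (j : ℕ) = 0
      · simp only [Ltil_eq, hi0, hj0, eq_self_iff_true, if_true, if_false, one_smul,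
          smul_mul_assoc, mul_smul_comm, smul_smul]
        rw [(ML3 hcomm (by omega) hir (le_of_lt hklv) hlr hkr).eq]
        match_scalars <;> (field_simp; try ring; try tauto)
      · simp only [Ltil_eq, hi0, hj0, eq_self_iff_true, if_true, if_false, one_smul,
          smul_mul_assoc, mul_smul_comm, smul_smul]
        have hA := congrArg (fun z : R => t⁻¹ • z)
          (ML2 ht hosc hcomm (p := (j : ℕ)) (q := (i : ℕ)) (c := (kk : ℕ)) (d := (ll : ℕ))
            (by omega) hijv hir hklv hlr)
        simp only [inv_smul_smul₀ ht, smul_add, smul_smul] at hA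
        rw [hA, ML1 ht hosc hcomm (by omega) hijv hir (le_of_lt hklv) hlr]
        simp only [smul_add, smul_smul]
        match_scalars <;> (field_simp; try ring; try tauto)
    · -- kk = ll
      rw [sumR_eq t x y kk]
      by_cases hj0 : (j : ℕ) = 0
      · simp only [Ltil_eq, hi0, hj0, eq_self_iff_true, if_true, if_false, one_smul,
          smul_mul_assoc, mul_smul_comm, smul_smul]
        rw [(ML3 hcomm (by omega) hir le_rfl hkr hkr).eq]
        have hd1 : x * t - y ≠ 0 := by rwa [mul_comm x t]
        have hd2 : -y + x * t ≠ 0 := by rwa [neg_add_eq_sub, mul_comm x t]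
        match_scalars <;> (field_simp; try ring; try tauto)
      · simp only [Ltil_eq, hi0, hj0, eq_self_iff_true, if_true, if_false, one_smul,
          smul_mul_assoc, mul_smul_comm, smul_smul]
        rw [ML1 ht hosc hcomm (by omega) hijv hir le_rfl hkr]
        simp only [smul_smul]
        have hd1 : x * t - y ≠ 0 := by rwa [mul_comm x t]
        have hd2 : -y + x * t ≠ 0 := by rwa [neg_add_eq_sub, mul_comm x t]
        match_scalars <;> (field_simp; try ring; try tauto)
    · -- ll < kk
      have hklv : (ll : ℕ) < (kk : ℕ) := hkl
      rw [sumR_gt t x y hkl]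
      by_cases hj0 : (j : ℕ) = 0
      · simp only [Ltil_eq, hi0, hj0, eq_self_iff_true, if_true, if_false, one_smul,
          smul_mul_assoc, mul_smul_comm, smul_smul]
        rw [ML4 ht hosc hcomm (by omega) hir hklv hkr]
        rw [(ML3 hcomm (by omega) hir (le_of_lt hklv) hkr hlr).eq]
        simp only [smul_add, smul_smul]
        match_scalars <;> (field_simp; try ring; try tauto)
      · simp only [Ltil_eq, hi0, hj0, eq_self_iff_true, if_true, if_false, one_smul,
          smul_mul_assoc, mul_smul_comm, smul_smul]
        rw [ML1 ht hosc hcomm (by omega) hijv hir (le_of_lt hklv) hkr]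
        simp only [smul_smul]
        match_scalars <;> (field_simp; try ring; try tauto)
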